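/- arXiv:1712.02492 — 3 statements merged into one kernel-verified Lean document; each statement's English description precedes it below -/
import Mathlib

section
/- Discrete comparison principle: let 𝒩 be a nodal set in ℝ^d in which every interior node lies in the topological interior of conv(𝒩), let w_h be a convex nodal function and v_h any nodal function on 𝒩. If v_h(x_i) ≥ w_h(x_i) for all boundary nodes x_i ∈ 𝒩ᴮ and vol(∂v_h(x_i)) ≤ vol(∂w_h(x_i)) for all interior nodes x_i ∈ 𝒩ᴵ, then v_h(x_i) ≥ w_h(x_i) for all x_i ∈ 𝒩. -/
open scoped BigOperators RealInnerProductSpace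
open MeasureTheory
open scoped Classical
open scoped Pointwise

noncomputable section

/-- `ℝ^d` with the Euclidean inner product. -/
abbrev Euc (d : ℕ) := EuclideanSpace ℝ (Fin d)

/-- Subdifferential of a nodal function `u` at a node `z`, relative to the nodal set `N`. -/
def nodalSubdiff {d : ℕ} (N : Finset (Euc d)) (u : Euc d → ℝ) (z : Euc d) : Set (Euc d) :=
  {p | ∀ y ∈ N, u z + ⟪p, y - z⟫ ≤ u y}

/-- A nodal function is convex if its subdifferential is nonempty at every interior node. -/
def IsConvexNodal {d : ℕ} (NI N : Finset (Euc d)) (u : Euc d → ℝ) : Prop :=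
  ∀ z ∈ NI, (nodalSubdiff N u z).Nonempty

/-- The convex envelope of a nodal function: the sup of affine functions lying below `u`
on the nodal set `N`. -/
def convEnv {d : ℕ} (N : Finset (Euc d)) (u : Euc d → ℝ) (x : Euc d) : ℝ :=
  sSup {t : ℝ | ∃ (q : Euc d) (c : ℝ), (∀ y ∈ N, ⟪q, y⟫ + c ≤ u y) ∧ t = ⟪q, x⟫ + c}

/-- Subdifferential of the convex envelope of a nodal function at a node `z`
(supporting slopes over the convex hull of the nodal set). -/
def envSubdiff {d : ℕ} (N : Finset (Euc d)) (u : Euc d → ℝ) (z : Euc d) : Set (Euc d) :=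
  {p | ∀ x ∈ convexHull ℝ (N : Set (Euc d)),
    convEnv N u z + ⟪p, x - z⟫ ≤ convEnv N u x}

/-- The vector in `ℝ^d` associated with an integer vector `e ∈ ℤ^d`. -/
def intVec {d : ℕ} (e : Fin d → ℤ) : Euc d := WithLp.toLp 2 (fun i => (e i : ℝ))

/-- Second-order difference of a nodal function `w` at `z` in direction `e ∈ ℤ^d`,
with nodal spacing `h`. -/
def delta2 {d : ℕ} (h : ℝ) (e : Fin d → ℤ) (w : Euc d → ℝ) (z : Euc d) : ℝ :=
  (w (z + h • intVec e) - 2 * w z + w (z - h • intVec e)) / (‖intVec e‖ ^ 2 * h ^ 2)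

/-! ### Auxiliary lemmas -/

lemma nodalSubdiff_isClosed {d : ℕ} (N : Finset (Euc d)) (u : Euc d → ℝ) (z : Euc d) :
    IsClosed (nodalSubdiff N u z) := by
  have h : nodalSubdiff N u z = ⋂ y ∈ N, {p : Euc d | u z + ⟪p, y - z⟫ ≤ u y} := by
    ext p; simp [nodalSubdiff]
  rw [h]
  refine isClosed_biInter fun y _ => ?_
  exact isClosed_le (continuous_const.add (Continuous.inner continuous_id continuous_const))
    continuous_const

lemma hyperplane_volume {d : ℕ} (v : Euc d) (hv : v ≠ 0) (c : ℝ) :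
    volume {p : Euc d | ⟪p, v⟫ = c} = 0 := by
  have hv0 : ‖v‖ ≠ 0 := norm_ne_zero_iff.mpr hv
  have hqv : ⟪(c / ‖v‖ ^ 2) • v, v⟫ = c := by
    rw [real_inner_smul_left, real_inner_self_eq_norm_sq]
    field_simp
  have hSne : ((ℝ ∙ v)ᗮ : Submodule ℝ (Euc d)) ≠ ⊤ := by
    intro h
    have hm : v ∈ (ℝ ∙ v)ᗮ := h ▸ Submodule.mem_top
    rw [Submodule.mem_orthogonal_singleton_iff_inner_left, inner_self_eq_zero] at hm
    exact hv hm
  have hset : {p : Euc d | ⟪p, v⟫ = c} =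
      ((c / ‖v‖ ^ 2) • v) +ᵥ (((ℝ ∙ v)ᗮ : Submodule ℝ (Euc d)) : Set (Euc d)) := by
    ext p
    simp only [Set.mem_setOf_eq, Set.mem_vadd_set_iff_neg_vadd_mem, vadd_eq_add,
      neg_add_eq_sub, SetLike.mem_coe, Submodule.mem_orthogonal_singleton_iff_inner_left]
    rw [inner_sub_left, hqv]
    constructor <;> intro h <;> linarith
  rw [hset, measure_vadd]
  exact Measure.addHaar_submodule volume _ hSne

set_option maxHeartbeats 1000000 in
/-- Discrete comparison principle. -/
theorem discrete_comparison_principle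
    (d : ℕ) (hd : 1 ≤ d) (NI NB : Finset (Euc d)) (hdisj : Disjoint NI NB)
    (hint : ∀ z ∈ NI, z ∈ interior (convexHull ℝ ((NI ∪ NB : Finset (Euc d)) : Set (Euc d))))
    (vh wh : Euc d → ℝ)
    (hw : IsConvexNodal NI (NI ∪ NB) wh)
    (hbdry : ∀ z ∈ NB, wh z ≤ vh z)
    (hvol : ∀ z ∈ NI,
      volume (nodalSubdiff (NI ∪ NB) vh z) ≤ volume (nodalSubdiff (NI ∪ NB) wh z)) :
    ∀ z ∈ NI ∪ NB, wh z ≤ vh z := by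
  by_contra hcon
  push_neg at hcon
  obtain ⟨z0, hz0N, hz0lt⟩ := hcon
  set N : Finset (Euc d) := NI ∪ NB with hNdef
  have hz0I : z0 ∈ NI := by
    rcases Finset.mem_union.mp hz0N with h | h
    · exact h
    · exact absurd (hbdry z0 h) (not_le.mpr hz0lt)
  have hNne : N.Nonempty := ⟨z0, hz0N⟩
  set M : ℝ := wh z0 - vh z0 with hMdef
  have hM0 : 0 < M := sub_pos.mpr hz0lt
  set D : ℝ := 1 + ∑ y ∈ N, ‖y - z0‖ with hDdef
  have hD0 : 0 < D := by
    have : (0:ℝ) ≤ ∑ y ∈ N, ‖y - z0‖ := Finset.sum_nonneg fun y _ => norm_nonneg _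
    rw [hDdef]; linarith
  have hDy : ∀ y ∈ N, ‖y - z0‖ ≤ D := by
    intro y hy
    have h1 : ‖y - z0‖ ≤ ∑ x ∈ N, ‖x - z0‖ :=
      Finset.single_le_sum (f := fun x => ‖x - z0‖) (fun x _ => norm_nonneg _) hy
    rw [hDdef]; linarith
  set δ : ℝ := M / (2 * D) with hδdef
  have hδ0 : 0 < δ := by rw [hδdef]; positivity
  have hδD : δ * D = M / 2 := by
    rw [hδdef]; field_simp
  clear_value M D δ
  set g : Euc d → ℝ := fun y => wh y + δ * ‖y - z0‖ - M / 2 with hgdef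
  set G : Finset (Euc d) := N.filter (fun z => vh z < g z) with hGdef
  have hz0G : z0 ∈ G := by
    refine Finset.mem_filter.mpr ⟨hz0N, ?_⟩
    show vh z0 < wh z0 + δ * ‖z0 - z0‖ - M / 2
    rw [sub_self, norm_zero, mul_zero, add_zero]
    have hM : M = wh z0 - vh z0 := hMdef
    linarith
  have hGN : ∀ z ∈ G, z ∈ N := fun z hz => (Finset.mem_filter.mp hz).1
  have hGg : ∀ z ∈ G, vh z < g z := fun z hz => (Finset.mem_filter.mp hz).2
  have hGI : ∀ z ∈ G, z ∈ NI := by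
    intro z hz
    rcases Finset.mem_union.mp (hGN z hz) with h | h
    · exact h
    · exfalso
      have h1 : δ * ‖z - z0‖ ≤ δ * D :=
        mul_le_mul_of_nonneg_left (hDy z (hGN z hz)) hδ0.le
      have h2 : vh z < wh z + δ * ‖z - z0‖ - M / 2 := hGg z hz
      have h3 := hbdry z h
      linarith [hδD]
  -- Claim B : translates of ∂wh(z0) by small vectors lie in ∂g(z0)
  have claimB : ∀ q ∈ nodalSubdiff N wh z0, ∀ r : Euc d, ‖r‖ ≤ δ →
      q + r ∈ nodalSubdiff N g z0 := by
    intro q hq r hr y hy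
    have h1 := hq y hy
    have h2 : ⟪r, y - z0⟫ ≤ δ * ‖y - z0‖ := by
      calc ⟪r, y - z0⟫ ≤ ‖r‖ * ‖y - z0‖ := real_inner_le_norm _ _
        _ ≤ δ * ‖y - z0‖ := mul_le_mul_of_nonneg_right hr (norm_nonneg _)
    have h3 : ⟪q + r, y - z0⟫ = ⟪q, y - z0⟫ + ⟪r, y - z0⟫ := inner_add_left _ _ _
    show wh z0 + δ * ‖z0 - z0‖ - M / 2 + ⟪q + r, y - z0⟫ ≤ wh y + δ * ‖y - z0‖ - M / 2
    rw [sub_self, norm_zero, mul_zero, add_zero, h3]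
    linarith
  -- Claim A : a translate of ∂wh(z) lies in ∂g(z) for z ≠ z0
  have claimA : ∀ z ∈ N, z ≠ z0 → ∀ p ∈ nodalSubdiff N wh z,
      p + δ • (‖z - z0‖⁻¹ • (z - z0)) ∈ nodalSubdiff N g z := by
    intro z hzN hzne p hp y hy
    set w : Euc d := z - z0 with hwdef
    have hw0 : w ≠ 0 := sub_ne_zero.mpr hzne
    have hnw : (0:ℝ) < ‖w‖ := norm_pos_iff.mpr hw0
    set u : Euc d := ‖w‖⁻¹ • w with hudef
    have h1 := hp y hy
    have huw : ⟪u, w⟫ = ‖w‖ := by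
      rw [hudef, real_inner_smul_left, real_inner_self_eq_norm_sq]
      field_simp
    have hun : ‖u‖ = 1 := by
      rw [hudef, norm_smul, norm_inv, norm_norm]
      field_simp
    have hyz : y - z = (y - z0) - w := by rw [hwdef, sub_sub_sub_cancel_right]
    have h2 : ⟪u, y - z⟫ = ⟪u, y - z0⟫ - ‖w‖ := by
      rw [hyz, inner_sub_right, huw]
    have h3 : ⟪u, y - z0⟫ ≤ ‖y - z0‖ := by
      calc ⟪u, y - z0⟫ ≤ ‖u‖ * ‖y - z0‖ := real_inner_le_norm _ _
        _ = ‖y - z0‖ := by rw [hun, one_mul]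
    have key : ‖w‖ + ⟪u, y - z⟫ ≤ ‖y - z0‖ := by rw [h2]; linarith
    have h4 : ⟪p + δ • u, y - z⟫ = ⟪p, y - z⟫ + δ * ⟪u, y - z⟫ := by
      rw [inner_add_left, real_inner_smul_left]
    show wh z + δ * ‖z - z0‖ - M / 2 + ⟪p + δ • u, y - z⟫ ≤ wh y + δ * ‖y - z0‖ - M / 2
    rw [h4]
    have h5 : δ * (‖w‖ + ⟪u, y - z⟫) ≤ δ * ‖y - z0‖ :=
      mul_le_mul_of_nonneg_left key hδ0.le
    have hwz : ‖z - z0‖ = ‖w‖ := by rw [hwdef]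
    rw [hwz]
    nlinarith [h5]
  -- Claim C : touching lemma
  have claimC : ∀ z ∈ G, ∀ p ∈ nodalSubdiff N g z, ∃ z' ∈ G, p ∈ nodalSubdiff N vh z' := by
    intro z hz p hp
    obtain ⟨z', hz'N, hmin⟩ := Finset.exists_min_image N (fun y => vh y - ⟪p, y⟫) hNne
    have hps : p ∈ nodalSubdiff N vh z' := by
      intro y hy
      have h := hmin y hy
      have hinner : ⟪p, y - z'⟫ = ⟪p, y⟫ - ⟪p, z'⟫ := inner_sub_right _ _ _
      linarith
    refine ⟨z', Finset.mem_filter.mpr ⟨hz'N, ?_⟩, hps⟩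
    have h1 := hmin z (hGN z hz)
    have h2 : vh z < g z := hGg z hz
    have h3 : g z + ⟪p, z' - z⟫ ≤ g z' := hp z' hz'N
    have hinner : ⟪p, z' - z⟫ = ⟪p, z'⟫ - ⟪p, z⟫ := inner_sub_right _ _ _
    linarith
  -- boundedness of ∂wh(z) for z ∈ G
  have bounded : ∀ z ∈ G, ∃ R : ℝ, nodalSubdiff N wh z ⊆ Metric.closedBall 0 R := by
    intro z hzG
    have hzNI := hGI z hzG
    have hzN : z ∈ N := hGN z hzG
    obtain ⟨ρ, hρ0, hball⟩ : ∃ ρ > 0, Metric.ball z ρ ⊆ convexHull ℝ (N : Set (Euc d)) := by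
      have h := hint z hzNI
      rw [mem_interior_iff_mem_nhds] at h
      exact Metric.mem_nhds_iff.mp h
    set C : ℝ := N.sup' hNne wh with hCdef
    have hCz : wh z ≤ C := Finset.le_sup' wh hzN
    refine ⟨2 / ρ * (C - wh z), ?_⟩
    intro p hp
    have hhull : ∀ x ∈ convexHull ℝ (N : Set (Euc d)), ⟪p, x⟫ ≤ (C - wh z) + ⟪p, z⟫ := by
      intro x hx
      have hconv : Convex ℝ {x : Euc d | ⟪p, x⟫ ≤ (C - wh z) + ⟪p, z⟫} :=
        convex_halfSpace_le
          ⟨fun a b => inner_add_right _ _ _, fun r a => real_inner_smul_right _ _ _⟩ _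
      have hNsub : (N : Set (Euc d)) ⊆ {x : Euc d | ⟪p, x⟫ ≤ (C - wh z) + ⟪p, z⟫} := by
        intro y hy
        have hyN : y ∈ N := hy
        have h1 := hp y hyN
        have h2 : wh y ≤ C := Finset.le_sup' wh hyN
        have h3 : ⟪p, y - z⟫ = ⟪p, y⟫ - ⟪p, z⟫ := inner_sub_right _ _ _
        simp only [Set.mem_setOf_eq]
        linarith
      exact convexHull_min hNsub hconv hx
    rcases eq_or_ne p 0 with rfl | hp0
    · simp only [Metric.mem_closedBall, dist_zero_right, norm_zero]
      have hC0 : 0 ≤ C - wh z := by linarith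
      have h20 : (0:ℝ) ≤ 2 / ρ := by positivity
      exact mul_nonneg h20 hC0
    · have hnp : (0:ℝ) < ‖p‖ := norm_pos_iff.mpr hp0
      set x : Euc d := z + (ρ / 2) • (‖p‖⁻¹ • p) with hxdef
      have hxz : x - z = (ρ / 2) • (‖p‖⁻¹ • p) := by rw [hxdef, add_sub_cancel_left]
      have hx : x ∈ Metric.ball z ρ := by
        rw [Metric.mem_ball, dist_eq_norm, hxz, norm_smul, norm_smul, norm_inv, norm_norm]
        rw [Real.norm_eq_abs, abs_of_pos (by linarith)]
        field_simp
        linarith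
      have h1 := hhull x (hball hx)
      have h2 : ⟪p, x⟫ = ⟪p, z⟫ + ρ / 2 * (‖p‖⁻¹ * ⟪p, p⟫) := by
        rw [hxdef, inner_add_right, real_inner_smul_right, real_inner_smul_right]
      have h3 : ‖p‖⁻¹ * ⟪p, p⟫ = ‖p‖ := by
        rw [real_inner_self_eq_norm_sq]; field_simp
      rw [h3] at h2
      rw [Metric.mem_closedBall, dist_zero_right]
      rw [h2] at h1
      have h4 : ρ / 2 * ‖p‖ ≤ C - wh z := by linarith
      rw [div_mul_eq_mul_div, le_div_iff₀ hρ0]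
      nlinarith
  have Wfin : ∀ z ∈ G, volume (nodalSubdiff N wh z) < ⊤ := by
    intro z hz
    obtain ⟨R, hR⟩ := bounded z hz
    exact lt_of_le_of_lt (measure_mono hR) measure_closedBall_lt_top
  -- a.e. disjointness of subdifferentials of g at distinct nodes
  have gdisj : (G : Set (Euc d)).Pairwise
      (Function.onFun (AEDisjoint volume) (fun z => nodalSubdiff N g z)) := by
    intro z1 hz1 z2 hz2 hne
    have hz1' : z1 ∈ G := hz1
    have hz2' : z2 ∈ G := hz2
    have hsub : nodalSubdiff N g z1 ∩ nodalSubdiff N g z2 ⊆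
        {p : Euc d | ⟪p, z1 - z2⟫ = g z1 - g z2} := by
      rintro p ⟨h1, h2⟩
      have ha := h1 z2 (hGN z2 hz2')
      have hb := h2 z1 (hGN z1 hz1')
      have hc : ⟪p, z2 - z1⟫ = -⟪p, z1 - z2⟫ := by
        rw [← inner_neg_right, neg_sub]
      simp only [Set.mem_setOf_eq]
      linarith
    exact measure_mono_null hsub (hyperplane_volume _ (sub_ne_zero.mpr hne) _)
  -- the extra-ball construction at z0
  obtain ⟨p0, hp0K⟩ := hw z0 hz0I
  obtain ⟨RK, hRK⟩ := bounded z0 hz0G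
  set i0 : Fin d := ⟨0, hd⟩ with hi0
  set e1 : Euc d := EuclideanSpace.single i0 (1:ℝ) with he1def
  have he1 : ‖e1‖ = 1 := by
    rw [he1def, EuclideanSpace.norm_single, norm_one]
  have he1sq : ⟪e1, e1⟫ = 1 := by
    rw [real_inner_self_eq_norm_sq, he1, one_pow]
  set SK : Set ℝ := (fun p => ⟪p, e1⟫) '' (nodalSubdiff N wh z0) with hSKdef
  have hSKne : SK.Nonempty := ⟨⟪p0, e1⟫, p0, hp0K, rfl⟩
  have hSKbdd : BddAbove SK := by
    refine ⟨RK, ?_⟩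
    rintro t ⟨p, hpK, rfl⟩
    have h1 : ‖p‖ ≤ RK := by
      have := hRK hpK
      rwa [Metric.mem_closedBall, dist_zero_right] at this
    calc ⟪p, e1⟫ ≤ ‖p‖ * ‖e1‖ := real_inner_le_norm _ _
      _ = ‖p‖ := by rw [he1, mul_one]
      _ ≤ RK := h1
  set s : ℝ := sSup SK with hsdef
  obtain ⟨t, ht, hts⟩ := exists_lt_of_lt_csSup hSKne (show s - δ / 2 < s by linarith)
  obtain ⟨q, hqK, rfl⟩ := ht
  set Cset : Set (Euc d) := Metric.ball q δ ∩ {x : Euc d | s < ⟪x, e1⟫} with hCsetdef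
  have hCopen : IsOpen Cset :=
    Metric.isOpen_ball.inter (isOpen_lt continuous_const
      (Continuous.inner continuous_id continuous_const))
  have hCne : Cset.Nonempty := by
    refine ⟨q + (3 * δ / 4) • e1, ?_, ?_⟩
    · rw [Metric.mem_ball, dist_eq_norm, add_sub_cancel_left, norm_smul, he1, mul_one,
        Real.norm_eq_abs, abs_of_pos (by linarith)]
      linarith
    · simp only [Set.mem_setOf_eq, inner_add_left, real_inner_smul_left, he1sq]
      linarith
  have hCpos : 0 < volume Cset := hCopen.measure_pos volume hCne
  have hCK : Disjoint (nodalSubdiff N wh z0) Cset := by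
    rw [Set.disjoint_left]
    intro x hxK hxC
    have h1 : ⟪x, e1⟫ ≤ s := le_csSup hSKbdd ⟨x, hxK, rfl⟩
    have h2 : s < ⟪x, e1⟫ := hxC.2
    linarith
  have hCsub : Cset ⊆ nodalSubdiff N g z0 := by
    intro x hx
    have hxq : ‖x - q‖ ≤ δ := by
      have h := hx.1
      rw [Metric.mem_ball, dist_eq_norm] at h
      exact h.le
    have := claimB q hqK (x - q) hxq
    rwa [add_sub_cancel] at this
  have hKsub : nodalSubdiff N wh z0 ⊆ nodalSubdiff N g z0 := by
    intro p hp
    have := claimB p hp 0 (by rw [norm_zero]; exact hδ0.le)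
    rwa [add_zero] at this
  have hz0meas : volume (nodalSubdiff N wh z0) + volume Cset ≤
      volume (nodalSubdiff N g z0) := by
    have hsub : nodalSubdiff N wh z0 ∪ Cset ⊆ nodalSubdiff N g z0 :=
      Set.union_subset hKsub hCsub
    calc volume (nodalSubdiff N wh z0) + volume Cset
        = volume (nodalSubdiff N wh z0 ∪ Cset) :=
          (measure_union hCK hCopen.measurableSet).symm
      _ ≤ volume (nodalSubdiff N g z0) := measure_mono hsub
  have hzmeas : ∀ z ∈ G.erase z0,
      volume (nodalSubdiff N wh z) ≤ volume (nodalSubdiff N g z) := by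
    intro z hz
    obtain ⟨hzne, hzG⟩ := Finset.mem_erase.mp hz
    have hzN : z ∈ N := hGN z hzG
    set t : Euc d := δ • (‖z - z0‖⁻¹ • (z - z0)) with htdef
    have h1 : t +ᵥ nodalSubdiff N wh z ⊆ nodalSubdiff N g z := by
      rintro _ ⟨p, hp, rfl⟩
      simpa [vadd_eq_add, add_comm] using claimA z hzN hzne p hp
    calc volume (nodalSubdiff N wh z)
        = volume (t +ᵥ nodalSubdiff N wh z) := (measure_vadd volume t _).symm
      _ ≤ volume (nodalSubdiff N g z) := measure_mono h1
  -- the measure chain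
  have hunion_sub : (⋃ z ∈ G, nodalSubdiff N g z) ⊆ ⋃ z ∈ G, nodalSubdiff N vh z := by
    intro p hp
    rw [Set.mem_iUnion₂] at hp ⊢
    obtain ⟨z, hz, hpz⟩ := hp
    obtain ⟨z', hz', hp'⟩ := claimC z hz p hpz
    exact ⟨z', hz', hp'⟩
  have step1 : ∑ z ∈ G, volume (nodalSubdiff N g z) =
      volume (⋃ z ∈ G, nodalSubdiff N g z) :=
    (measure_biUnion_finset₀ gdisj
      (fun z _ => (nodalSubdiff_isClosed N g z).measurableSet.nullMeasurableSet)).symm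
  have step2 : volume (⋃ z ∈ G, nodalSubdiff N vh z) ≤
      ∑ z ∈ G, volume (nodalSubdiff N vh z) := measure_biUnion_finset_le _ _
  have step3 : ∑ z ∈ G, volume (nodalSubdiff N vh z) ≤
      ∑ z ∈ G, volume (nodalSubdiff N wh z) :=
    Finset.sum_le_sum fun z hz => hvol z (hGI z hz)
  have lower : ∑ z ∈ G, volume (nodalSubdiff N wh z) + volume Cset ≤
      ∑ z ∈ G, volume (nodalSubdiff N g z) := by
    rw [← Finset.add_sum_erase G (fun z => volume (nodalSubdiff N wh z)) hz0G,
      ← Finset.add_sum_erase G (fun z => volume (nodalSubdiff N g z)) hz0G]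
    calc volume (nodalSubdiff N wh z0) + ∑ z ∈ G.erase z0, volume (nodalSubdiff N wh z)
          + volume Cset
        = (volume (nodalSubdiff N wh z0) + volume Cset)
          + ∑ z ∈ G.erase z0, volume (nodalSubdiff N wh z) := by ring
      _ ≤ volume (nodalSubdiff N g z0) + ∑ z ∈ G.erase z0, volume (nodalSubdiff N g z) :=
          add_le_add hz0meas (Finset.sum_le_sum hzmeas)
  have final : ∑ z ∈ G, volume (nodalSubdiff N wh z) + volume Cset ≤
      ∑ z ∈ G, volume (nodalSubdiff N wh z) :=
    lower.trans (step1 ▸ (measure_mono hunion_sub).trans (step2.trans step3))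
  have hTfin : ∑ z ∈ G, volume (nodalSubdiff N wh z) ≠ ⊤ :=
    (ENNReal.sum_lt_top.mpr fun z hz => Wfin z hz).ne
  have hC0 : volume Cset ≤ 0 := by
    have h := final
    rw [add_comm] at h
    have h' : volume Cset + ∑ z ∈ G, volume (nodalSubdiff N wh z) ≤
        0 + ∑ z ∈ G, volume (nodalSubdiff N wh z) := by simpa using h
    exact (ENNReal.add_le_add_iff_right hTfin).mp h'
  exact absurd hCpos (not_lt.mpr hC0)
end
end

section
/- Estimate of second-order differences on the contact set: let 𝒩 be a nodal set in ℝ^d with nodal spacing h > 0, let u_h and v_h be convex nodal functions on 𝒩, let 0 < ε < 1, and set w_ε := u_h − (1−ε)v_h and w^ε := v_h − (1−ε)u_h. Let 𝒞_ε := {x_i ∈ 𝒩ᴵ : Γ(w_ε)(x_i) = w_ε(x_i)} and 𝒞^ε := {x_i ∈ 𝒩ᴵ : Γ(w^ε)(x_i) = w^ε(x_i)} be the corresponding contact sets. If x_i ∈ 𝒞_ε ∩ 𝒞^ε, then for every e ∈ ℤ^d \ {0} such that x_i + he ∈ 𝒩 and x_i − he ∈ 𝒩, one has −ε δ_e v_h(x_i)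 ≤ δ_e(u_h − v_h)(x_i) ≤ (ε/(1−ε)) δ_e v_h(x_i). -/
open scoped BigOperators RealInnerProductSpace
open MeasureTheory
open scoped Classical

noncomputable section

/-- At a contact point, the convex envelope constraint forces nonnegative second
differences. -/
lemma contact_two_mul_le {d : ℕ} (N : Finset (Euc d)) (w : Euc d → ℝ) (xi a : Euc d)
    (hxi : xi ∈ N) (hp : xi + a ∈ N) (hm : xi - a ∈ N)
    (hc : convEnv N w xi = w xi) : 2 * w xi ≤ w (xi + a) + w (xi - a) := by
  have hNne : N.Nonempty := ⟨xi, hxi⟩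
  set S : Set ℝ :=
    {t : ℝ | ∃ (q : Euc d) (c : ℝ), (∀ y ∈ N, ⟪q, y⟫ + c ≤ w y) ∧ t = ⟪q, xi⟫ + c} with hS
  have hSne : S.Nonempty := by
    refine ⟨⟪(0 : Euc d), xi⟫ + (N.image w).min' (hNne.image w), (0 : Euc d),
      (N.image w).min' (hNne.image w), fun y hy => ?_, rfl⟩
    rw [inner_zero_left, zero_add]
    exact Finset.min'_le _ _ (Finset.mem_image_of_mem w hy)
  have hbound : ∀ t ∈ S, t ≤ (w (xi + a) + w (xi - a)) / 2 := by
    rintro t ⟨q, c, hqc, rfl⟩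
    have h1 := hqc _ hp
    have h2 := hqc _ hm
    rw [inner_add_right] at h1
    rw [inner_sub_right] at h2
    linarith
  have : convEnv N w xi ≤ (w (xi + a) + w (xi - a)) / 2 := csSup_le hSne hbound
  rw [hc] at this
  linarith

/-- Estimate of second-order differences on the contact set. -/
theorem secondOrderDifference_estimate_on_contact_set
    (d : ℕ) (hd : 1 ≤ d) (NI NB : Finset (Euc d)) (hdisj : Disjoint NI NB)
    (h : ℝ) (hh : 0 < h)
    (uh vh : Euc d → ℝ)
    (hu : IsConvexNodal NI (NI ∪ NB) uh) (hv : IsConvexNodal NI (NI ∪ NB) vh)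
    (ε : ℝ) (hε0 : 0 < ε) (hε1 : ε < 1)
    (xi : Euc d) (hxi : xi ∈ NI)
    -- `x_i` belongs to the contact set `𝒞_ε` of `w_ε = u_h - (1-ε) v_h`
    (hCb : convEnv (NI ∪ NB) (fun y => uh y - (1 - ε) * vh y) xi
      = uh xi - (1 - ε) * vh xi)
    -- `x_i` belongs to the contact set `𝒞^ε` of `w^ε = v_h - (1-ε) u_h`
    (hCa : convEnv (NI ∪ NB) (fun y => vh y - (1 - ε) * uh y) xi
      = vh xi - (1 - ε) * uh xi)
    (e : Fin d → ℤ) (he : e ≠ 0)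
    (hep : xi + h • intVec e ∈ NI ∪ NB) (hem : xi - h • intVec e ∈ NI ∪ NB) :
    -ε * delta2 h e vh xi ≤ delta2 h e (fun y => uh y - vh y) xi ∧
      delta2 h e (fun y => uh y - vh y) xi ≤ (ε / (1 - ε)) * delta2 h e vh xi := by

  have h1e : 0 < 1 - ε := by linarith
  have hvne : intVec e ≠ 0 := by
    intro h0
    apply he
    funext i
    have := congrArg (fun v : Euc d => v i) h0
    simpa [intVec] using this
  have hD : 0 < ‖intVec e‖ ^ 2 * h ^ 2 := by
    have : 0 < ‖intVec e‖ := norm_pos_iff.mpr hvne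
    positivity
  set a := h • intVec e with ha
  have H1 := contact_two_mul_le (NI ∪ NB) (fun y => uh y - (1 - ε) * vh y) xi a
    (Finset.mem_union_left _ hxi) hep hem hCb
  have H2 := contact_two_mul_le (NI ∪ NB) (fun y => vh y - (1 - ε) * uh y) xi a
    (Finset.mem_union_left _ hxi) hep hem hCa
  set D := ‖intVec e‖ ^ 2 * h ^ 2 with hDdef
  have hdu : delta2 h e (fun y => uh y - vh y) xi
      = ((uh (xi + a) - vh (xi + a)) - 2 * (uh xi - vh xi) + (uh (xi - a) - vh (xi - a))) / D :=
    rfl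
  have hdv : delta2 h e vh xi = (vh (xi + a) - 2 * vh xi + vh (xi - a)) / D := rfl
  constructor
  · rw [hdu, hdv, mul_div_assoc' (-ε), div_le_div_iff_of_pos_right hD]
    linarith
  · rw [hdu, hdv, mul_div_assoc' (ε / (1 - ε)), div_le_div_iff_of_pos_right hD,
      div_mul_eq_mul_div, le_div_iff₀ h1e]
    nlinarith [H2]
end
end

section
/- One-sided contact-set bound: let 𝒩 be a nodal set in ℝ^d with nodal spacing h > 0, let u_h and v_h be convex nodal functions on 𝒩, let 0 < ε < 1, and set w_ε := u_h − (1−ε)v_h. If x_i belongs to the contact set 𝒞_ε := {x_i ∈ 𝒩ᴵ : Γ(w_ε)(x_i) = w_ε(x_i)}, then for every e ∈ ℤ^d \ {0} with x_i + he ∈ 𝒩 and x_i − he ∈ 𝒩 one has δ_e(v_h − u_h)(x_i) ≤ ε δ_e v_h(x_i). Consequently, if δ_e(v_h − u_h)(x_i) > ε δ_e v_h(x_i) for some such e, then x_i lies in the non-contact set S_ε := 𝒩ᴵ \ 𝒞_ε. -/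
open scoped BigOperators RealInnerProductSpace
open MeasureTheory
open scoped Classical

noncomputable section

/-- Key midpoint inequality at a contact node: if the convex envelope touches `w`
at `xi`, then `w` is "midpoint convex" along any pair of symmetric nodes. -/
lemma contact_midpoint {d : ℕ} (N : Finset (Euc d)) (w : Euc d → ℝ)
    (xi v : Euc d) (hxi : xi ∈ N) (ha : xi + v ∈ N) (hb : xi - v ∈ N)
    (heq : convEnv N w xi = w xi) :
    2 * w xi ≤ w (xi + v) + w (xi - v) := by
  have hne : {t : ℝ | ∃ (q : Euc d) (c : ℝ), (∀ y ∈ N, ⟪q, y⟫ + c ≤ w y) ∧ t = ⟪q, xi⟫ + c}.Nonempty := by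
    classical
    have hNne : (N.image w).Nonempty := ⟨w xi, Finset.mem_image_of_mem w hxi⟩
    refine ⟨⟪(0 : Euc d), xi⟫ + (N.image w).min' hNne, 0, (N.image w).min' hNne, ?_, rfl⟩
    intro y hy
    have : (N.image w).min' hNne ≤ w y := Finset.min'_le _ _ (Finset.mem_image_of_mem w hy)
    simpa using this
  have hle : convEnv N w xi ≤ (w (xi + v) + w (xi - v)) / 2 := by
    apply csSup_le hne
    rintro t ⟨q, c, hqc, rfl⟩
    have hqa := hqc _ ha
    have hqb := hqc _ hb
    have h1 : ⟪q, xi + v⟫ = ⟪q, xi⟫ + ⟪q, v⟫ := inner_add_right q xi v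
    have h2 : ⟪q, xi - v⟫ = ⟪q, xi⟫ - ⟪q, v⟫ := inner_sub_right q xi v
    linarith
  rw [heq] at hle
  linarith

/-- One-sided contact-set bound, and the consequence that nodes with a large
second-order difference lie in the non-contact set. -/
theorem one_sided_contact_bound
    (d : ℕ) (hd : 1 ≤ d) (NI NB : Finset (Euc d)) (hdisj : Disjoint NI NB)
    (h : ℝ) (hh : 0 < h)
    (uh vh : Euc d → ℝ)
    (hu : IsConvexNodal NI (NI ∪ NB) uh) (hv : IsConvexNodal NI (NI ∪ NB) vh)
    (ε : ℝ) (hε0 : 0 < ε) (hε1 : ε < 1) :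
    -- First part: on the contact set `𝒞_ε` of `w_ε = u_h - (1-ε) v_h` one has
    -- `δ_e (v_h - u_h)(x_i) ≤ ε δ_e v_h(x_i)`.
    (∀ xi ∈ NI,
      convEnv (NI ∪ NB) (fun y => uh y - (1 - ε) * vh y) xi
          = uh xi - (1 - ε) * vh xi →
      ∀ e : Fin d → ℤ, e ≠ 0 →
        xi + h • intVec e ∈ NI ∪ NB → xi - h • intVec e ∈ NI ∪ NB →
          delta2 h e (fun y => vh y - uh y) xi ≤ ε * delta2 h e vh xi) ∧
    -- Consequence: strict inequality for some direction forces membership in `S_ε`.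
    (∀ xi ∈ NI,
      (∃ e : Fin d → ℤ, e ≠ 0 ∧ xi + h • intVec e ∈ NI ∪ NB ∧
          xi - h • intVec e ∈ NI ∪ NB ∧
          ε * delta2 h e vh xi < delta2 h e (fun y => vh y - uh y) xi) →
      ¬ convEnv (NI ∪ NB) (fun y => uh y - (1 - ε) * vh y) xi
          = uh xi - (1 - ε) * vh xi) := by
  classical
  have main : ∀ xi ∈ NI,
      convEnv (NI ∪ NB) (fun y => uh y - (1 - ε) * vh y) xi
          = uh xi - (1 - ε) * vh xi →
      ∀ e : Fin d → ℤ, e ≠ 0 →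
        xi + h • intVec e ∈ NI ∪ NB → xi - h • intVec e ∈ NI ∪ NB →
          delta2 h e (fun y => vh y - uh y) xi ≤ ε * delta2 h e vh xi := by
    intro xi hxi heq e he hpa hpb
    have hxiN : xi ∈ NI ∪ NB := Finset.mem_union_left _ hxi
    have hmid := contact_midpoint (NI ∪ NB) (fun y => uh y - (1 - ε) * vh y)
      xi (h • intVec e) hxiN hpa hpb heq
    have hwnn : 0 ≤ delta2 h e (fun y => uh y - (1 - ε) * vh y) xi := by
      apply div_nonneg
      · simp only at hmid ⊢; linarith
      · positivity
    have key : delta2 h e (fun y => vh y - uh y) xi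
        = ε * delta2 h e vh xi - delta2 h e (fun y => uh y - (1 - ε) * vh y) xi := by
      simp only [delta2]
      ring
    linarith
  refine ⟨main, ?_⟩
  intro xi hxi ⟨e, he, hpa, hpb, hlt⟩ heq
  exact absurd (main xi hxi heq e he hpa hpb) (not_le.mpr hlt)
end
end
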